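/- Let p, p', q, q' be integers with Δ := p·q' − p'·q ≠ 0, and let z, w ∈ ℂ∖{0,1} satisfy z^p·(1−z)^q = w^p·(1−w)^q and z^{p'}·(1−z)^{q'} = w^{p'}·(1−w)^{q'} (integer powers). Then (w/z)^Δ = 1 and ((1−w)/(1−z))^Δ = 1. Moreover, if z ≠ w, then setting η := w/z and η' := (1−w)/(1−z) one has η ≠ 1, η' ≠ 1, η ≠ η', η^p·η'^q = 1, η^{p'}·η'^{q'} = 1, and z = (1−η')/(η−η'). -/
import Mathlib


theorem double_point_roots_of_unity (p p' q q' : ℤ) (hΔ : p * q' - p' * q ≠ 0)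
    (z w : ℂ) (hz0 : z ≠ 0) (hz1 : z ≠ 1) (hw0 : w ≠ 0) (hw1 : w ≠ 1)
    (h1 : z ^ p * (1 - z) ^ q = w ^ p * (1 - w) ^ q)
    (h2 : z ^ p' * (1 - z) ^ q' = w ^ p' * (1 - w) ^ q') :
    (w / z) ^ (p * q' - p' * q) = 1 ∧
    ((1 - w) / (1 - z)) ^ (p * q' - p' * q) = 1 ∧
    (z ≠ w →
      w / z ≠ 1 ∧ (1 - w) / (1 - z) ≠ 1 ∧ w / z ≠ (1 - w) / (1 - z) ∧
      (w / z) ^ p * ((1 - w) / (1 - z)) ^ q = 1 ∧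
      (w / z) ^ p' * ((1 - w) / (1 - z)) ^ q' = 1 ∧
      z = (1 - (1 - w) / (1 - z)) / (w / z - (1 - w) / (1 - z))) := by
  have hz1' : (1:ℂ) - z ≠ 0 := sub_ne_zero.mpr (Ne.symm hz1)
  have hw1' : (1:ℂ) - w ≠ 0 := sub_ne_zero.mpr (Ne.symm hw1)
  set η := w / z with hηdef
  set η' := (1 - w) / (1 - z) with hη'def
  have hηne : η ≠ 0 := div_ne_zero hw0 hz0
  have hη'ne : η' ≠ 0 := div_ne_zero hw1' hz1'
  have hden : z ^ p * (1 - z) ^ q ≠ 0 :=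
    mul_ne_zero (zpow_ne_zero _ hz0) (zpow_ne_zero _ hz1')
  have hden' : z ^ p' * (1 - z) ^ q' ≠ 0 :=
    mul_ne_zero (zpow_ne_zero _ hz0) (zpow_ne_zero _ hz1')
  have hη : η ^ p * η' ^ q = 1 := by
    rw [hηdef, hη'def, div_zpow, div_zpow, div_mul_div_comm, ← h1, div_self hden]
  have hη' : η ^ p' * η' ^ q' = 1 := by
    rw [hηdef, hη'def, div_zpow, div_zpow, div_mul_div_comm, ← h2, div_self hden']
  have e1 : η ^ (p * q') * η' ^ (q * q') = 1 := by
    rw [zpow_mul, zpow_mul, ← mul_zpow, hη, one_zpow]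
  have e2 : η ^ (p' * q) * η' ^ (q * q') = 1 := by
    rw [mul_comm q q', zpow_mul, zpow_mul, ← mul_zpow, hη', one_zpow]
  have hE : η ^ (p * q') = η ^ (p' * q) :=
    mul_right_cancel₀ (zpow_ne_zero _ hη'ne) (e1.trans e2.symm)
  have e3 : η ^ (p * p') * η' ^ (q * p') = 1 := by
    rw [zpow_mul, zpow_mul, ← mul_zpow, hη, one_zpow]
  have e4 : η ^ (p * p') * η' ^ (q' * p) = 1 := by
    rw [mul_comm p p', zpow_mul, zpow_mul, ← mul_zpow, hη', one_zpow]
  have hE' : η' ^ (q * p') = η' ^ (q' * p) :=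
    mul_left_cancel₀ (zpow_ne_zero _ hηne) (e3.trans e4.symm)
  have goal1 : η ^ (p * q' - p' * q) = 1 := by
    rw [zpow_sub₀ hηne, hE, div_self (zpow_ne_zero _ hηne)]
  have goal2 : η' ^ (p * q' - p' * q) = 1 := by
    have : p * q' - p' * q = q' * p - q * p' := by ring
    rw [this, zpow_sub₀ hη'ne, ← hE', div_self (zpow_ne_zero _ hη'ne)]
  refine ⟨goal1, goal2, fun hzw => ?_⟩
  have hη1 : η ≠ 1 := by
    intro h
    exact hzw ((div_eq_one_iff_eq hz0).mp h).symm
  have hη'1 : η' ≠ 1 := by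
    intro h
    have := (div_eq_one_iff_eq hz1').mp h
    exact hzw (by linear_combination this)
  have hηη' : η ≠ η' := by
    intro h
    rw [hηdef, hη'def, div_eq_div_iff hz0 hz1'] at h
    exact hzw (by linear_combination -h)
  refine ⟨hη1, hη'1, hηη', hη, hη', ?_⟩
  have hne : η - η' ≠ 0 := sub_ne_zero.mpr hηη'
  rw [eq_div_iff hne, hηdef, hη'def]
  field_simp
  ring
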